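/- arXiv:1011.2372 — 3 statements merged into one kernel-verified Lean document; each statement's English description precedes it below -/
import Mathlib

section
/- Let A ⊆ X and S ⊆ X* be bounded and ε ≥ 0 with A having ε-interchangeable double limits with S. Then A has ε-interchangeable double limits with the closure of S in the topology γ of uniform convergence on bounded countable subsets of X. -/
noncomputable section
open Filter Topology Set NormedSpace Pointwise

variable {X : Type*} [NormedAddCommGroup X] [NormedSpace ℝ X] [CompleteSpace X]

/-- `B` is a boundary for `X`: a subset of the dual unit sphere on which every
element of `X` attains its norm. -/
def IsBoundary (B : Set (StrongDual ℝ X)) : Prop :=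
  (∀ f ∈ B, ‖f‖ = 1) ∧ ∀ x : X, ∃ f ∈ B, f x = ‖x‖

/-- The closure of `S` in the topology `σ_B` of pointwise convergence on `B`. -/
def sigmaClosure (B : Set (StrongDual ℝ X)) (S : Set X) : Set X :=
  {x | ∀ ε > (0 : ℝ), ∀ F : Finset (StrongDual ℝ X), (F : Set (StrongDual ℝ X)) ⊆ B →
    ∃ y ∈ S, ∀ f ∈ F, |f x - f y| < ε}

/-- `A` has `ε`-interchangeable double limits with `M`. -/
def DoubleLimits (A : Set X) (ε : ℝ) (M : Set (StrongDual ℝ X)) : Prop :=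
  ∀ (x : ℕ → X) (f : ℕ → StrongDual ℝ X), (∀ n, x n ∈ A) → (∀ m, f m ∈ M) →
    ∀ (u v : ℕ → ℝ) (l L : ℝ),
      (∀ n, Tendsto (fun m => f m (x n)) atTop (𝓝 (u n))) →
      Tendsto u atTop (𝓝 l) →
      (∀ m, Tendsto (fun n => f m (x n)) atTop (𝓝 (v m))) →
      Tendsto v atTop (𝓝 L) →
      |l - L| ≤ ε

/-- The closure of `S` in the topology `γ` of uniform convergence on bounded
countable subsets of `X`. -/
def gammaClosure (S : Set (StrongDual ℝ X)) : Set (StrongDual ℝ X) :=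
  {f | ∀ ε > (0 : ℝ), ∀ D : Set X, D.Countable → Bornology.IsBounded D →
    ∃ g ∈ S, ∀ x ∈ D, |f x - g x| ≤ ε}

theorem double_limits_gamma_closure (A : Set X) (hA : Bornology.IsBounded A)
    (S : Set (StrongDual ℝ X)) (hS : ∃ C : ℝ, ∀ f ∈ S, ‖f‖ ≤ C)
    (ε : ℝ) (hε : 0 ≤ ε) (h : DoubleLimits A ε S) :
    DoubleLimits A ε (gammaClosure S) := by
  intro x f hx hf u v l L hu hl hv hL
  obtain ⟨C, hC⟩ := hS
  obtain ⟨R, hR⟩ := hA.exists_norm_le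
  -- choose approximating functionals in S
  have H : ∀ m : ℕ, ∃ g ∈ S, ∀ n, |f m (x n) - g (x n)| ≤ 1 / (m + 1) := by
    intro m
    obtain ⟨g, hgS, hg⟩ := hf m (1 / (m + 1)) (by positivity) (Set.range x)
      (Set.countable_range x) (hA.subset (Set.range_subset_iff.2 hx))
    exact ⟨g, hgS, fun n => hg (x n) (Set.mem_range_self n)⟩
  choose g hgS hg using H
  have hδ : Tendsto (fun m : ℕ => 1 / ((m : ℝ) + 1)) atTop (𝓝 0) :=
    tendsto_one_div_add_atTop_nhds_zero_nat
  -- uniform bound on values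
  have hCR : ∀ m n, g m (x n) ∈ Set.Icc (-(C * R)) (C * R) := by
    intro m n
    have h1 : ‖g m (x n)‖ ≤ ‖g m‖ * ‖x n‖ := (g m).le_opNorm _
    have h2 : ‖g m‖ * ‖x n‖ ≤ C * R :=
      mul_le_mul (hC _ (hgS m)) (hR _ (hx n)) (norm_nonneg _)
        ((norm_nonneg _).trans (hC _ (hgS m)))
    have := h1.trans h2
    rw [Real.norm_eq_abs, abs_le] at this
    exact ⟨this.1, this.2⟩
  -- extract a subsequence along which g m (x n) converges for all m
  have hK : IsCompact (Set.univ.pi fun _ : ℕ => Set.Icc (-(C * R)) (C * R)) :=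
    isCompact_univ_pi fun _ => isCompact_Icc
  have hG : ∀ n, (fun m => g m (x n)) ∈ Set.univ.pi fun _ : ℕ =>
      Set.Icc (-(C * R)) (C * R) := fun n => by
    intro m _; exact hCR m n
  obtain ⟨a, -, φ, hφ, hconv⟩ := hK.tendsto_subseq hG
  have hconv' : ∀ m, Tendsto (fun k => g m (x (φ k))) atTop (𝓝 (a m)) := by
    intro m
    exact (continuous_apply m).continuousAt.tendsto.comp hconv
  -- limits in n along the subsequence
  have hvφ : ∀ m, Tendsto (fun k => f m (x (φ k))) atTop (𝓝 (v m)) :=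
    fun m => (hv m).comp hφ.tendsto_atTop
  -- |a m - v m| ≤ 1/(m+1)
  have hav : ∀ m, |a m - v m| ≤ 1 / (m + 1) := by
    intro m
    have : Tendsto (fun k => |g m (x (φ k)) - f m (x (φ k))|) atTop
        (𝓝 |a m - v m|) :=
      (continuous_abs.continuousAt.tendsto).comp ((hconv' m).sub (hvφ m))
    refine le_of_tendsto this (Eventually.of_forall fun k => ?_)
    rw [abs_sub_comm]; exact hg m (φ k)
  -- a tends to L
  have haL : Tendsto a atTop (𝓝 L) := by
    have h0 : Tendsto (fun m => a m - v m) atTop (𝓝 0) := by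
      apply squeeze_zero_norm (fun m => ?_) hδ
      simpa using hav _
    have := h0.add hL
    simpa using this
  -- limits in m for each fixed point of the subsequence
  have huφ : ∀ k, Tendsto (fun m => g m (x (φ k))) atTop (𝓝 (u (φ k))) := by
    intro k
    have h0 : Tendsto (fun m => g m (x (φ k)) - f m (x (φ k))) atTop (𝓝 0) := by
      apply squeeze_zero_norm (fun m => ?_) hδ
      simpa [abs_sub_comm] using hg m (φ k)
    have := h0.add (hu (φ k))
    simpa using this
  have hulφ : Tendsto (fun k => u (φ k)) atTop (𝓝 l) := hl.comp hφ.tendsto_atTop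
  exact h (fun k => x (φ k)) g (fun k => hx (φ k)) hgS (fun k => u (φ k)) a l L
    huφ hulφ hconv' haL
end
end

section
/- Let (x_n) be a bounded sequence in X and B ⊆ B_{X*} such that the γ-closed convex hull of B equals B_{X*}, where γ is the topology of uniform convergence on bounded countable subsets of X. Then the σ_B-closed convex hull of {x_n : n ∈ ℕ} equals its norm-closed convex hull. -/
noncomputable section
open Filter Topology Set NormedSpace Pointwise

variable {X : Type*} [NormedAddCommGroup X] [NormedSpace ℝ X] [CompleteSpace X]

set_option maxHeartbeats 1000000 in
theorem sigma_hull_eq_norm_hull (x : ℕ → X) (C : ℝ) (hx : ∀ n, ‖x n‖ ≤ C)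
    (B : Set (StrongDual ℝ X)) (hB : ∀ f ∈ B, ‖f‖ ≤ 1)
    (hdense : gammaClosure (convexHull ℝ B) = {f : StrongDual ℝ X | ‖f‖ ≤ 1}) :
    sigmaClosure B (convexHull ℝ (Set.range x)) =
      closure (convexHull ℝ (Set.range x)) := by
  classical
  set K := convexHull ℝ (Set.range x) with hKdef
  apply Set.Subset.antisymm
  · -- hard direction: σ_B-closure ⊆ norm closure
    intro x₀ hx₀
    by_contra hcl
    have hKconv : Convex ℝ (closure K) := (convex_convexHull ℝ _).closure
    obtain ⟨f, u, hfu, hux⟩ :=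
      geometric_hahn_banach_closed_point hKconv isClosed_closure hcl
    -- normalize f
    have hf0 : f ≠ 0 := by
      intro h
      have h0 : x 0 ∈ closure K :=
        subset_closure (subset_convexHull ℝ _ (Set.mem_range_self 0))
      have := hfu _ h0
      rw [h] at this hux
      simp at this hux
      linarith
    have hfnorm : (0 : ℝ) < ‖f‖ := norm_pos_iff.mpr hf0
    set c : ℝ := ‖f‖⁻¹ with hc
    have hcpos : 0 < c := inv_pos.mpr hfnorm
    set f' : StrongDual ℝ X := c • f with hf'
    have hf'norm : ‖f'‖ ≤ 1 := by
      rw [hf', norm_smul, Real.norm_eq_abs, abs_of_pos hcpos, hc,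
        inv_mul_cancel₀ (ne_of_gt hfnorm)]
    set u' : ℝ := c * u with hu'
    have hf'app : ∀ a : X, f' a = c * f a := fun a => by
      rw [hf', ContinuousLinearMap.smul_apply, smul_eq_mul]
    have hsep : ∀ a ∈ closure K, f' a < u' := by
      intro a ha
      rw [hf'app]
      exact mul_lt_mul_of_pos_left (hfu a ha) hcpos
    have hsep' : u' < f' x₀ := by
      rw [hf'app]
      exact mul_lt_mul_of_pos_left hux hcpos
    set δ : ℝ := (f' x₀ - u') / 4 with hδ
    have hδpos : 0 < δ := by simp only [hδ]; linarith
    -- f' is in the γ-closure of convexHull B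
    have hf'mem : f' ∈ gammaClosure (convexHull ℝ B) := by
      rw [hdense]; exact hf'norm
    -- the countable bounded set D
    set D : Set X := insert x₀ (Set.range x) with hD
    have hDc : D.Countable := (Set.countable_range x).insert x₀
    have hDb : Bornology.IsBounded D := by
      refine Bornology.IsBounded.insert ?_ x₀
      refine (Metric.isBounded_closedBall (x := (0 : X)) (r := C)).subset ?_
      rintro _ ⟨n, rfl⟩
      simpa [Metric.mem_closedBall, dist_eq_norm] using hx n
    obtain ⟨g, hgmem, hgapprox⟩ := hf'mem δ hδpos D hDc hDb
    -- g is close to f' on x₀ and on all x n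
    have hgx₀ : f' x₀ - δ ≤ g x₀ := by
      have := hgapprox x₀ (Set.mem_insert _ _)
      have := abs_le.mp this
      linarith [this.1]
    have hgbound : ∀ y ∈ K, g y ≤ u' + δ := by
      have hsub : Set.range x ⊆ {y : X | g y ≤ u' + δ} := by
        rintro _ ⟨n, rfl⟩
        have h1 := hgapprox (x n) (Set.mem_insert_of_mem _ (Set.mem_range_self n))
        have h2 := (abs_le.mp h1).1
        have h3 : f' (x n) < u' :=
          hsep _ (subset_closure (subset_convexHull ℝ _ (Set.mem_range_self n)))
        simp only [Set.mem_setOf_eq]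
        linarith
      have hconvset : Convex ℝ {y : X | g y ≤ u' + δ} :=
        convex_halfSpace_le (IsLinearMap.mk g.map_add g.map_smul) _
      exact fun y hy => convexHull_min hsub hconvset hy
    -- write g as a convex combination of elements of B
    rw [convexHull_eq] at hgmem
    obtain ⟨ι, t, w, z, hw0, hw1, hzB, hcm⟩ := hgmem
    -- use the σ_B-closure property with F = image of z on t
    obtain ⟨y, hyK, hyclose⟩ := hx₀ δ hδpos (t.image z) (by
      intro φ hφ
      simp only [Finset.coe_image, Set.mem_image, Finset.mem_coe] at hφ
      obtain ⟨i, hi, rfl⟩ := hφ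
      exact hzB i hi)
    -- g is the weighted sum
    have hgsum : ∀ a : X, g a = ∑ i ∈ t, w i * z i a := by
      intro a
      rw [← hcm, Finset.centerMass, hw1]
      simp [ContinuousLinearMap.sum_apply]
    have hdiff : g x₀ - g y ≤ δ := by
      rw [hgsum, hgsum, ← Finset.sum_sub_distrib]
      calc ∑ i ∈ t, (w i * z i x₀ - w i * z i y)
          ≤ ∑ i ∈ t, w i * δ := by
            refine Finset.sum_le_sum fun i hi => ?_
            have hz : |z i x₀ - z i y| < δ :=
              hyclose (z i) (Finset.mem_image_of_mem z hi)
            have h1 : z i x₀ - z i y ≤ δ := le_of_lt ((abs_lt.mp hz).2)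
            have := hw0 i hi
            nlinarith
        _ = δ := by rw [← Finset.sum_mul, hw1, one_mul]
    have h1 : g y ≤ u' + δ := hgbound y hyK
    have h2 : f' x₀ = u' + 4 * δ := by simp only [hδ]; ring
    linarith
  · -- easy direction: norm closure ⊆ σ_B-closure
    intro x₀ hx₀ ε hε F hF
    obtain ⟨y, hy, hyd⟩ := Metric.mem_closure_iff.mp hx₀ ε hε
    refine ⟨y, hy, fun f hf => ?_⟩
    have hfn : ‖f‖ ≤ 1 := hB f (hF hf)
    calc |f x₀ - f y| = ‖f (x₀ - y)‖ := by rw [map_sub]; rfl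
      _ ≤ ‖f‖ * ‖x₀ - y‖ := f.le_opNorm _
      _ ≤ 1 * ‖x₀ - y‖ := by
          exact mul_le_mul_of_nonneg_right hfn (norm_nonneg _)
      _ < ε := by rw [one_mul, ← dist_eq_norm]; exact hyd
end
end

section
/- If X is a real Banach space containing an isomorphic copy of ℓ¹, then for every 0 < ε < 2 there exist sequences (x_n) in B_X and (x*_m) in B_{X*} such that lim_n lim_m x*_m(x_n) and lim_m lim_n x*_m(x_n) both exist and differ by more than ε; i.e., the statement B_X §ε§ B_{X*} is false for every 0 < ε < 2. -/
noncomputable section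
open Filter Topology Set NormedSpace Pointwise

variable {X : Type*} [NormedAddCommGroup X] [NormedSpace ℝ X] [CompleteSpace X]

/-- `X` contains an isomorphic copy of `ℓ¹`. -/
def ContainsL1 (X : Type*) [NormedAddCommGroup X] [NormedSpace ℝ X] : Prop :=
  ∃ T : lp (fun _ : ℕ => ℝ) 1 →L[ℝ] X, ∃ c > (0 : ℝ), ∀ y, c * ‖y‖ ≤ ‖T y‖


section JamesAux

variable {X : Type*} [NormedAddCommGroup X] [NormedSpace ℝ X]

private lemma exists_l1_seq (hX : ContainsL1 X) :
    ∃ (z : ℕ → X) (c : ℝ), 0 < c ∧ (∀ i, ‖z i‖ = 1) ∧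
      ∀ (F : Finset ℕ) (a : ℕ → ℝ), c * ∑ i ∈ F, |a i| ≤ ‖∑ i ∈ F, a i • z i‖ := by
  obtain ⟨T, c, hc, hT⟩ := hX
  have hp : (0:ℝ) < (1 : ENNReal).toReal := by norm_num
  set e : ℕ → lp (fun _ : ℕ => ℝ) 1 := fun i => lp.single 1 i (1:ℝ) with he
  have hnorme : ∀ i, ‖e i‖ = 1 := by
    intro i
    have := lp.norm_single (E := fun _ : ℕ => ℝ) (by norm_num : (0:ENNReal) < 1) i (1:ℝ)
    simpa [e] using this
  have hsum : ∀ (F : Finset ℕ) (g : ℕ → ℝ),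
      ‖∑ i ∈ F, g i • e i‖ = ∑ i ∈ F, |g i| := by
    intro F g
    have := lp.norm_sum_single (E := fun _ : ℕ => ℝ) hp g F
    have h2 : ∀ i, lp.single (E := fun _ : ℕ => ℝ) 1 i (g i) = g i • e i := by
      intro i
      have := lp.single_smul (E := fun _ : ℕ => ℝ) 1 i (g i) (1:ℝ)
      show lp.single (E := fun _ : ℕ => ℝ) 1 i (g i) = g i • lp.single (E := fun _ : ℕ => ℝ) 1 i (1:ℝ)
      rw [← this, smul_eq_mul, mul_one]
    simp only [h2] at this
    simpa [abs_nonneg, Real.norm_eq_abs] using this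
  set y : ℕ → X := fun i => T (e i) with hy
  have hyc : ∀ i, c ≤ ‖y i‖ := fun i => by
    simpa [hnorme i] using hT (e i)
  have hypos : ∀ i, 0 < ‖y i‖ := fun i => lt_of_lt_of_le hc (hyc i)
  have hyT : ∀ i, ‖y i‖ ≤ ‖T‖ := fun i => by
    calc ‖y i‖ ≤ ‖T‖ * ‖e i‖ := T.le_opNorm _
    _ = ‖T‖ := by rw [hnorme i, mul_one]
  have hTpos : (0:ℝ) < ‖T‖ := lt_of_lt_of_le hc (by simpa using (hyc 0).trans (hyT 0))
  refine ⟨fun i => ‖y i‖⁻¹ • y i, c / ‖T‖, div_pos hc hTpos, ?_, ?_⟩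
  · intro i
    rw [norm_smul, norm_inv, norm_norm, inv_mul_cancel₀ (hypos i).ne']
  · intro F a
    have key : ∑ i ∈ F, a i • (‖y i‖⁻¹ • y i) = T (∑ i ∈ F, (a i / ‖y i‖) • e i) := by
      rw [map_sum]
      refine Finset.sum_congr rfl fun i _ => ?_
      rw [smul_smul, div_eq_mul_inv, ContinuousLinearMap.map_smul]
    rw [key]
    calc c / ‖T‖ * ∑ i ∈ F, |a i| ≤ c * ∑ i ∈ F, |a i / ‖y i‖| := by
          rw [div_mul_eq_mul_div, div_eq_mul_inv, mul_assoc, ]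
          gcongr c * ?_
          rw [Finset.sum_mul]
          refine Finset.sum_le_sum fun i _ => ?_
          rw [abs_div, abs_of_nonneg (norm_nonneg _), div_eq_mul_inv]
          exact mul_le_mul_of_nonneg_left
            (inv_anti₀ (hypos i) (hyT i)) (abs_nonneg _)
      _ ≤ c * ‖∑ i ∈ F, (a i / ‖y i‖) • e i‖ := by rw [hsum]
      _ ≤ ‖T (∑ i ∈ F, (a i / ‖y i‖) • e i)‖ := hT _

private lemma exists_good_seq (z : ℕ → X) (c : ℝ) (hc : 0 < c) (hz : ∀ i, ‖z i‖ = 1)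
    (hlow : ∀ (F : Finset ℕ) (a : ℕ → ℝ), c * ∑ i ∈ F, |a i| ≤ ‖∑ i ∈ F, a i • z i‖)
    (θ : ℝ) (hθ : θ < 1) :
    ∃ w : ℕ → X, (∀ k, ‖w k‖ ≤ 1) ∧ ∀ (G : Finset ℕ) (b : ℕ → ℝ),
      θ * ∑ k ∈ G, |b k| ≤ ‖∑ k ∈ G, b k • w k‖ := by
  rcases le_or_gt θ 0 with hθ0 | hθ0
  · refine ⟨z, fun k => (hz k).le, fun G b => ?_⟩
    have : θ * ∑ k ∈ G, |b k| ≤ 0 :=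
      mul_nonpos_of_nonpos_of_nonneg hθ0 (Finset.sum_nonneg fun _ _ => abs_nonneg _)
    exact this.trans (norm_nonneg _)
  -- the sets S N and their sups
  set S : ℕ → Set ℝ := fun N => {t | ∃ (F : Finset ℕ) (a : ℕ → ℝ),
      (∀ i ∈ F, N ≤ i) ∧ ‖∑ i ∈ F, a i • z i‖ ≤ 1 ∧ t = ∑ i ∈ F, |a i|} with hS
  have hmem1 : ∀ N, (1:ℝ) ∈ S N := by
    intro N
    refine ⟨{N}, fun _ => 1, by simp, by simp [hz N], by simp⟩
  have hub : ∀ N, ∀ t ∈ S N, t ≤ 1 / c := by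
    rintro N t ⟨F, a, -, hn, rfl⟩
    rw [le_div_iff₀ hc, mul_comm]
    exact (hlow F a).trans hn
  have hbdd : ∀ N, BddAbove (S N) := fun N => ⟨1/c, hub N⟩
  set γN : ℕ → ℝ := fun N => sSup (S N) with hγN
  have hγN1 : ∀ N, 1 ≤ γN N := fun N => le_csSup (hbdd N) (hmem1 N)
  -- key scaling inequality
  have key : ∀ (N : ℕ) (F : Finset ℕ) (a : ℕ → ℝ), (∀ i ∈ F, N ≤ i) →
      ∑ i ∈ F, |a i| ≤ γN N * ‖∑ i ∈ F, a i • z i‖ := by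
    intro N F a hF
    set v := ∑ i ∈ F, a i • z i with hv
    rcases eq_or_lt_of_le (norm_nonneg v) with h0 | h0
    · have : c * ∑ i ∈ F, |a i| ≤ 0 := by rw [h0]; exact hlow F a
      have hnn : (0:ℝ) ≤ ∑ i ∈ F, |a i| := Finset.sum_nonneg fun _ _ => abs_nonneg _
      nlinarith [mul_nonneg (le_trans zero_le_one (hγN1 N)) (norm_nonneg v)]
    · have hmem : (∑ i ∈ F, |a i|) / ‖v‖ ∈ S N := by
        refine ⟨F, fun i => a i / ‖v‖, hF, ?_, ?_⟩
        · have : ∑ i ∈ F, (a i / ‖v‖) • z i = ‖v‖⁻¹ • v := by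
            rw [hv, Finset.smul_sum]
            exact Finset.sum_congr rfl fun i _ => by
              rw [smul_smul, div_eq_mul_inv, mul_comm]
          rw [this, norm_smul, norm_inv, norm_norm, inv_mul_cancel₀ h0.ne']
        · rw [Finset.sum_div]
          refine Finset.sum_congr rfl fun i _ => ?_
          rw [abs_div, abs_of_nonneg (norm_nonneg _)]
      have := le_csSup (hbdd N) hmem
      rw [div_le_iff₀ h0] at this
      linarith [this]
  -- the infimum over N
  set η : ℝ := (1 - θ) / 2 with hη
  have hη0 : 0 < η := by rw [hη]; linarith
  have hηθ : θ = 1 - 2 * η := by rw [hη]; ring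
  have hrange : (Set.range γN).Nonempty := ⟨γN 0, ⟨0, rfl⟩⟩
  have hbdd2 : BddBelow (Set.range γN) := ⟨1, by rintro t ⟨N, rfl⟩; exact hγN1 N⟩
  set γ : ℝ := sInf (Set.range γN) with hγ
  have hγ1 : 1 ≤ γ := le_csInf hrange (by rintro t ⟨N, rfl⟩; exact hγN1 N)
  obtain ⟨-, ⟨N₀, rfl⟩, hN₀⟩ : ∃ t ∈ Set.range γN, t < γ + η :=
    exists_lt_of_csInf_lt hrange (by linarith)
  -- selection of blocks
  have selection : ∀ M : ℕ, ∃ (F : Finset ℕ) (a : ℕ → ℝ),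
      (∀ i ∈ F, M ≤ i) ∧ ‖∑ i ∈ F, a i • z i‖ ≤ 1 ∧ γ - η < ∑ i ∈ F, |a i| := by
    intro M
    have h1 : γ - η < γN M := by
      have : γ ≤ γN M := csInf_le hbdd2 ⟨M, rfl⟩
      linarith
    obtain ⟨t, ⟨F, a, hF, hn, rfl⟩, ht⟩ := exists_lt_of_lt_csSup ⟨1, hmem1 M⟩ h1
    exact ⟨F, a, hF, hn, ht⟩
  choose Fs as_ hFs hnorm hsum using selection
  -- the recursive sequence of starting indices
  set Nk : ℕ → ℕ := fun k => Nat.rec N₀ (fun _ M => (Fs M).sup id + 1) k with hNk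
  have hNksucc : ∀ k, Nk (k + 1) = (Fs (Nk k)).sup id + 1 := fun k => rfl
  set F : ℕ → Finset ℕ := fun k => Fs (Nk k) with hF
  set a : ℕ → ℕ → ℝ := fun k => as_ (Nk k) with ha
  set w : ℕ → X := fun k => ∑ i ∈ F k, a k i • z i with hw
  have hsk : ∀ k, γ - η < ∑ i ∈ F k, |a k i| := fun k => hsum (Nk k)
  have hwn : ∀ k, ‖w k‖ ≤ 1 := fun k => hnorm (Nk k)
  have hmemk : ∀ k, ∀ i ∈ F k, Nk k ≤ i := fun k => hFs (Nk k)
  have hltk : ∀ k, ∀ i ∈ F k, i < Nk (k + 1) := by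
    intro k i hi
    rw [hNksucc]
    exact Nat.lt_succ_of_le (Finset.le_sup (f := id) hi)
  have hFne : ∀ k, (F k).Nonempty := by
    intro k
    rw [Finset.nonempty_iff_ne_empty]
    intro h
    have := hsk k
    rw [h, Finset.sum_empty] at this
    linarith
  have hNmono : StrictMono Nk := by
    apply strictMono_nat_of_lt_succ
    intro k
    obtain ⟨i, hi⟩ := hFne k
    exact lt_of_le_of_lt (hmemk k i hi) (hltk k i hi)
  have hcross : ∀ j k, j < k → ∀ i ∈ F j, ∀ i' ∈ F k, i < i' := by
    intro j k hjk i hi i' hi'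
    calc i < Nk (j + 1) := hltk j i hi
      _ ≤ Nk k := hNmono.le_iff_le.mpr hjk
      _ ≤ i' := hmemk k i' hi'
  have hdisj : ∀ (G : Finset ℕ), ∀ j ∈ G, ∀ k ∈ G, j ≠ k → Disjoint (F j) (F k) := by
    intro G j _ k _ hne
    rw [Finset.disjoint_left]
    intro i hij hik
    rcases hne.lt_or_gt with h | h
    · exact lt_irrefl i (hcross j k h i hij i hik)
    · exact lt_irrefl i (hcross k j h i hik i hij)
  refine ⟨w, hwn, ?_⟩
  intro G b
  set U : Finset ℕ := G.biUnion F with hU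
  set A : ℕ → ℝ := fun i => ∑ k ∈ G, if i ∈ F k then b k * a k i else 0 with hA
  have hAval : ∀ k ∈ G, ∀ i ∈ F k, A i = b k * a k i := by
    intro k hk i hi
    simp only [hA]
    rw [Finset.sum_eq_single_of_mem k hk]
    · rw [if_pos hi]
    · intro k' hk' hne
      rw [if_neg]
      exact fun hik' => (Finset.disjoint_left.mp (hdisj G k' hk' k hk hne) hik') hi
  have hrepr : ∑ i ∈ U, A i • z i = ∑ k ∈ G, b k • w k := by
    rw [hU, Finset.sum_biUnion (hdisj G)]
    refine Finset.sum_congr rfl fun k hk => ?_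
    rw [hw, Finset.smul_sum]
    refine Finset.sum_congr rfl fun i hi => ?_
    rw [hAval k hk i hi, mul_smul]
  have habs : ∑ k ∈ G, |b k| * (∑ i ∈ F k, |a k i|) = ∑ i ∈ U, |A i| := by
    rw [hU, Finset.sum_biUnion (hdisj G)]
    refine Finset.sum_congr rfl fun k hk => ?_
    rw [Finset.mul_sum]
    refine Finset.sum_congr rfl fun i hi => ?_
    rw [hAval k hk i hi, abs_mul]
  have hUmem : ∀ i ∈ U, N₀ ≤ i := by
    intro i hi
    rw [hU, Finset.mem_biUnion] at hi
    obtain ⟨k, hk, hik⟩ := hi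
    calc N₀ = Nk 0 := rfl
      _ ≤ Nk k := hNmono.le_iff_le.mpr (Nat.zero_le k)
      _ ≤ i := hmemk k i hik
  have hkey := key N₀ U A hUmem
  rw [← habs, hrepr] at hkey
  -- final computation
  have hSb : (0:ℝ) ≤ ∑ k ∈ G, |b k| := Finset.sum_nonneg fun _ _ => abs_nonneg _
  have hlb : (γ - η) * ∑ k ∈ G, |b k| ≤ ∑ k ∈ G, |b k| * (∑ i ∈ F k, |a k i|) := by
    rw [Finset.mul_sum]
    refine Finset.sum_le_sum fun k _ => ?_
    rw [mul_comm]
    exact mul_le_mul_of_nonneg_left (hsk k).le (abs_nonneg _)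
  have hmul : θ * (γ + η) ≤ γ - η := by nlinarith
  have hγη : (0:ℝ) < γ + η := by linarith
  have hnn : (0:ℝ) ≤ ‖∑ k ∈ G, b k • w k‖ := norm_nonneg _
  have h2 : ∑ k ∈ G, |b k| * (∑ i ∈ F k, |a k i|) ≤ (γ + η) * ‖∑ k ∈ G, b k • w k‖ :=
    hkey.trans (mul_le_mul_of_nonneg_right hN₀.le hnn)
  rw [← mul_le_mul_iff_right₀ hγη, mul_comm (γ + η) (θ * _), mul_assoc]
  calc θ * ((∑ k ∈ G, |b k|) * (γ + η)) = (θ * (γ + η)) * ∑ k ∈ G, |b k| := by ring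
    _ ≤ (γ - η) * ∑ k ∈ G, |b k| := mul_le_mul_of_nonneg_right hmul hSb
    _ ≤ ∑ k ∈ G, |b k| * (∑ i ∈ F k, |a k i|) := hlb
    _ ≤ (γ + η) * ‖∑ k ∈ G, b k • w k‖ := h2

private lemma exists_functionals (w : ℕ → X) (θ : ℝ) (hθ0 : 0 < θ)
    (hlow : ∀ (G : Finset ℕ) (b : ℕ → ℝ), θ * ∑ k ∈ G, |b k| ≤ ‖∑ k ∈ G, b k • w k‖)
    (m : ℕ) :
    ∃ g : StrongDual ℝ X, ‖g‖ ≤ 1 ∧ ∀ n, g (w n) = if n ≤ m then θ else -θ := by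
  have hzero : ∀ (G : Finset ℕ) (b : ℕ → ℝ), ∑ k ∈ G, b k • w k = 0 → ∀ k ∈ G, b k = 0 := by
    intro G b h0 k hk
    have h1 : θ * ∑ k ∈ G, |b k| ≤ 0 := by
      have := hlow G b; rwa [h0, norm_zero] at this
    have h2 : ∑ k ∈ G, |b k| ≤ 0 := nonpos_of_mul_nonpos_left (by linarith : (∑ k ∈ G, |b k|) * θ ≤ 0) hθ0
    have h3 : ∑ k ∈ G, |b k| = 0 :=
      le_antisymm h2 (Finset.sum_nonneg fun _ _ => abs_nonneg _)
    have := (Finset.sum_eq_zero_iff_of_nonneg fun _ _ => abs_nonneg _).mp h3 k hk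
    exact abs_eq_zero.mp this
  have hli : LinearIndependent ℝ w := by
    rw [linearIndependent_iff'']
    intro s g hg h0 i
    by_cases hi : i ∈ s
    · exact hzero s g h0 i hi
    · exact hg i hi
  set p : Subspace ℝ X := Submodule.span ℝ (Set.range w) with hp
  set bs : Module.Basis ℕ ℝ p := Module.Basis.span hli with hbs
  set vals : ℕ → ℝ := fun k => if k ≤ m then θ else -θ with hvals
  set φ : p →ₗ[ℝ] ℝ := Module.Basis.constr (M' := ℝ) bs ℝ vals with hφ
  have hbound : ∀ x : p, ‖φ x‖ ≤ 1 * ‖x‖ := by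
    intro x
    set r := bs.repr x with hr
    have hφx : φ x = ∑ i ∈ r.support, r i * vals i := by
      rw [hφ, Module.Basis.constr_apply, Finsupp.sum]
      rfl
    have hx : (x : X) = ∑ i ∈ r.support, r i • w i := by
      have h1 : (Finsupp.linearCombination ℝ ⇑bs) r = x := bs.linearCombination_repr x
      have h2 : ((Finsupp.linearCombination ℝ ⇑bs) r : X) = ∑ i ∈ r.support, r i • w i := by
        rw [Finsupp.linearCombination_apply, Finsupp.sum]
        push_cast
        refine Finset.sum_congr rfl fun i _ => ?_
        congr 1
        exact congrArg Subtype.val (Module.Basis.span_apply hli i)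
      rw [← h2, h1]
    have h3 : ‖φ x‖ ≤ θ * ∑ i ∈ r.support, |r i| := by
      rw [hφx, Real.norm_eq_abs]
      calc |∑ i ∈ r.support, r i * vals i| ≤ ∑ i ∈ r.support, |r i * vals i| :=
            Finset.abs_sum_le_sum_abs _ _
        _ = ∑ i ∈ r.support, θ * |r i| := by
            refine Finset.sum_congr rfl fun i _ => ?_
            rw [abs_mul]
            simp only [hvals]
            rcases le_or_gt i m with h | h
            · rw [if_pos h, abs_of_pos hθ0, mul_comm]
            · rw [if_neg (not_le.mpr h), abs_neg, abs_of_pos hθ0, mul_comm]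
        _ = θ * ∑ i ∈ r.support, |r i| := by rw [Finset.mul_sum]
    have h4 : θ * ∑ i ∈ r.support, |r i| ≤ ‖(x : X)‖ := by
      rw [hx]; exact hlow _ _
    rw [one_mul]
    exact h3.trans h4
  set φc : p →L[ℝ] ℝ := LinearMap.mkContinuous φ 1 hbound with hφc
  obtain ⟨g, hgext, hgnorm⟩ := exists_extension_norm_eq p φc
  refine ⟨g, ?_, ?_⟩
  · rw [hgnorm]
    exact LinearMap.mkContinuous_norm_le φ zero_le_one hbound
  · intro n
    have hmem : w n ∈ p := Submodule.subset_span (Set.mem_range_self n)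
    have h1 : g (w n) = φc ⟨w n, hmem⟩ := hgext ⟨w n, hmem⟩
    have h2 : (⟨w n, hmem⟩ : p) = bs n := by
      apply Subtype.ext
      rw [Module.Basis.span_apply hli n]
    rw [h1, h2]
    show φ (bs n) = _
    rw [hφ, Module.Basis.constr_basis]

end JamesAux

theorem l1_bad_double_limits (hX : ContainsL1 X) :
    ∀ ε : ℝ, 0 < ε → ε < 2 →
      ∃ (x : ℕ → X) (f : ℕ → StrongDual ℝ X) (u v : ℕ → ℝ) (l L : ℝ),
        (∀ n, ‖x n‖ ≤ 1) ∧ (∀ m, ‖f m‖ ≤ 1) ∧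
        (∀ n, Tendsto (fun m => f m (x n)) atTop (𝓝 (u n))) ∧
        Tendsto u atTop (𝓝 l) ∧
        (∀ m, Tendsto (fun n => f m (x n)) atTop (𝓝 (v m))) ∧
        Tendsto v atTop (𝓝 L) ∧
        ε < |l - L| := by
  intro ε hε0 hε2
  set θ : ℝ := (ε + 2) / 4 with hθdef
  have hθ0 : 0 < θ := by rw [hθdef]; linarith
  have hθ1 : θ < 1 := by rw [hθdef]; linarith
  obtain ⟨z, c, hc, hz, hlow⟩ := exists_l1_seq hX
  obtain ⟨w, hw1, hwlow⟩ := exists_good_seq z c hc hz hlow θ hθ1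
  choose g hg1 hgval using exists_functionals w θ hθ0 hwlow
  refine ⟨w, g, fun _ => θ, fun _ => -θ, θ, -θ, hw1, hg1, ?_, tendsto_const_nhds, ?_,
    tendsto_const_nhds, ?_⟩
  · intro n
    refine Tendsto.congr' ?_ tendsto_const_nhds
    filter_upwards [eventually_ge_atTop n] with m hm
    rw [hgval m n, if_pos hm]
  · intro m
    refine Tendsto.congr' ?_ tendsto_const_nhds
    filter_upwards [eventually_ge_atTop (m + 1)] with n hn
    rw [hgval m n, if_neg (by omega)]
  · have : |θ - -θ| = 2 * θ := by
      rw [sub_neg_eq_add, abs_of_pos (by linarith)]; ring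
    rw [this, hθdef]; linarith
end
end
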